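/- Let B be a finite nonempty set, Ω a finite set, t ⊆ Ω with |t| = k, P : B → (probability distributions on Ω), and φ(f) = ∑_{ω∈t} P(f)(ω). Let 𝒫 be the simplex of probability distributions on B, with Bias(D, t) = ∑_f D(f)φ(f) − k/|Ω| for D ∈ 𝒫. Then for q_min ∈ (0,1], if D is drawn uniformly (with respect to Lebesgue measure on the simplex), μ({D ∈ 𝒫 : Bias(D,t) ≥ q_min}) / μ(𝒫) ≤ (k/|Ω| + Bias(B,t)) / q_min, where Bias(B,t) denotes the bias of the uniform distribution on B. -/

import Mathlib

open MeasureTheory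

namespace FamineAux
set_option linter.unusedSectionVars false

variable {ι : Type*} [Fintype ι] [DecidableEq ι]

/-- The standard simplex region in `ι → ℝ`. -/
def Simp (ι : Type*) [Fintype ι] : Set (ι → ℝ) :=
  {x | (∀ i, 0 ≤ x i) ∧ ∑ i, x i ≤ 1}

lemma isClosed_simp : IsClosed (Simp ι) := by
  have h1 : IsClosed {x : ι → ℝ | ∀ i, 0 ≤ x i} := by
    have : {x : ι → ℝ | ∀ i, 0 ≤ x i} = ⋂ i, {x | 0 ≤ x i} := by ext x; simp
    rw [this]
    exact isClosed_iInter fun i => isClosed_le continuous_const (continuous_apply i)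
  have h2 : IsClosed {x : ι → ℝ | ∑ i, x i ≤ 1} :=
    isClosed_le (continuous_finset_sum _ fun k _ => continuous_apply k) continuous_const
  exact h1.inter h2

lemma measurableSet_simp : MeasurableSet (Simp ι) := isClosed_simp.measurableSet

lemma simp_subset_pi : Simp ι ⊆ Set.pi Set.univ (fun _ : ι => Set.Icc (0:ℝ) 1) := by
  intro x hx i _
  refine ⟨hx.1 i, ?_⟩
  calc x i ≤ ∑ j, x j := Finset.single_le_sum (fun j _ => hx.1 j) (Finset.mem_univ i)
  _ ≤ 1 := hx.2

lemma isCompact_simp : IsCompact (Simp ι) :=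
  (isCompact_univ_pi fun _ => isCompact_Icc).of_isClosed_subset isClosed_simp simp_subset_pi

def Lmap (i : ι) : (ι → ℝ) →ₗ[ℝ] (ι → ℝ) where
  toFun x := Function.update x i (- ∑ j, x j)
  map_add' x y := by
    funext j
    rcases eq_or_ne j i with rfl | h
    · simp [Finset.sum_add_distrib]; ring
    · simp [Function.update_apply, h]
  map_smul' c x := by
    funext j
    rcases eq_or_ne j i with rfl | h
    · simp [Finset.mul_sum]
    · simp [Function.update_apply, h]

/-- The reflection map swapping coordinate `i` with `1 - ∑ x`. -/
def Tmap (i : ι) (x : ι → ℝ) : ι → ℝ := Function.update x i (1 - ∑ j, x j)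

lemma Tmap_eq (i : ι) (x : ι → ℝ) : Tmap i x = Pi.single i (1:ℝ) + Lmap i x := by
  funext j
  rcases eq_or_ne j i with rfl | h
  · simp [Tmap, Lmap]; ring
  · simp [Tmap, Lmap, Function.update_apply, h, Pi.single_apply]

lemma sum_Tmap (i : ι) (x : ι → ℝ) : ∑ j, Tmap i x j = 1 - x i := by
  classical
  rw [Tmap, Finset.sum_update_of_mem (Finset.mem_univ i)]
  have : ∑ j ∈ Finset.univ \ {i}, x j = (∑ j, x j) - x i := by
    rw [Finset.sum_sdiff_eq_sub (Finset.singleton_subset_iff.2 (Finset.mem_univ i))]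
    simp
  rw [this]; ring

lemma Tmap_invol (i : ι) (x : ι → ℝ) : Tmap i (Tmap i x) = x := by
  funext j
  rcases eq_or_ne j i with rfl | h
  · rw [Tmap, Function.update_self, sum_Tmap]
    simp [Tmap]
  · simp [Tmap, Function.update_apply, h]

lemma Tmap_preimage (i : ι) : Tmap i ⁻¹' (Simp ι) = Simp ι := by
  ext x
  simp only [Set.mem_preimage, Simp, Set.mem_setOf_eq, sum_Tmap]
  constructor
  · rintro ⟨h1, h2⟩
    have hxi : 0 ≤ x i := by linarith
    have hsum : ∑ j, x j ≤ 1 := by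
      have := h1 i
      simp [Tmap] at this
      linarith
    refine ⟨fun j => ?_, hsum⟩
    rcases eq_or_ne j i with rfl | h
    · exact hxi
    · have := h1 j
      simpa [Tmap, Function.update_apply, h] using this
  · rintro ⟨h1, h2⟩
    refine ⟨fun j => ?_, by linarith [h1 i]⟩
    rcases eq_or_ne j i with rfl | h
    · simp [Tmap]; linarith
    · simpa [Tmap, Function.update_apply, h] using h1 j

lemma continuous_Tmap (i : ι) : Continuous (Tmap i) := by
  refine continuous_pi fun j => ?_
  simp only [Tmap, Function.update_apply]
  rcases eq_or_ne j i with rfl | h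
  · have hc : Continuous fun a : ι → ℝ => 1 - ∑ j, a j :=
      continuous_const.sub (continuous_finset_sum _ fun k _ => continuous_apply k)
    simpa using hc
  · simpa [h] using continuous_apply j

def Teq (i : ι) : (ι → ℝ) ≃ᵐ (ι → ℝ) :=
  Homeomorph.toMeasurableEquiv
    { toFun := Tmap i
      invFun := Tmap i
      left_inv := Tmap_invol i
      right_inv := Tmap_invol i
      continuous_toFun := continuous_Tmap i
      continuous_invFun := continuous_Tmap i }

lemma toMatrix_Lmap (i : ι) :
    LinearMap.toMatrix' (Lmap i) = (1 : Matrix ι ι ℝ).updateRow i (fun _ => -1) := by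
  ext j k
  rw [LinearMap.toMatrix'_apply]
  rcases eq_or_ne j i with rfl | h
  · simp [Lmap, Matrix.updateRow_apply, Finset.sum_ite_eq]
  · simp [Lmap, Function.update_apply, Matrix.updateRow_apply, h, Matrix.one_apply, eq_comm, Pi.single_apply]

lemma det_Lmap (i : ι) : LinearMap.det (Lmap i : (ι → ℝ) →ₗ[ℝ] (ι → ℝ)) = -1 := by
  rw [← LinearMap.det_toMatrix', toMatrix_Lmap]
  have hrow : (fun _ : ι => (-1 : ℝ)) = ∑ k, (fun _ : ι => (-1:ℝ)) k • (1 : Matrix ι ι ℝ) k := by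
    funext l
    simp [Matrix.one_apply, Finset.sum_ite_eq]
  rw [hrow, Matrix.det_updateRow_sum]
  simp

lemma measurePreserving_Lmap (i : ι) :
    MeasurePreserving (Lmap i : (ι → ℝ) →ₗ[ℝ] (ι → ℝ)) volume volume := by
  have hdet : LinearMap.det (Lmap i : (ι → ℝ) →ₗ[ℝ] (ι → ℝ)) ≠ 0 := by
    rw [det_Lmap]; norm_num
  refine ⟨(Lmap i).continuous_of_finiteDimensional.measurable, ?_⟩
  rw [Measure.map_linearMap_addHaar_eq_smul_addHaar volume hdet, det_Lmap]
  norm_num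

lemma measurePreserving_Tmap (i : ι) :
    MeasurePreserving (Tmap i) (volume : Measure (ι → ℝ)) volume := by
  have : Tmap i = (fun y => Pi.single i (1:ℝ) + y) ∘ (Lmap i) := by
    funext x; exact Tmap_eq i x
  rw [this]
  exact (measurePreserving_add_left volume _).comp (measurePreserving_Lmap i)

/-- Key symmetry: the integral of `1 - ∑ x` over the simplex equals that of any coordinate. -/
lemma integral_one_sub_sum (i : ι) :
    ∫ x in Simp ι, (1 - ∑ j, x j) = ∫ x in Simp ι, x i := by
  have h := (measurePreserving_Tmap i).setIntegral_preimage_emb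
    (Teq i).measurableEmbedding (fun x => x i) (Simp ι)
  rw [Tmap_preimage] at h
  rw [← h]
  apply setIntegral_congr_fun measurableSet_simp
  intro x hx
  show (1 - ∑ j, x j) = Tmap i x i
  simp [Tmap]

end FamineAux


namespace FamineAux

open MeasureTheory in
theorem main {ι B : Type*} [Fintype ι] [DecidableEq ι] [Fintype B] [Nonempty B]
    (D : (ι → ℝ) → B → ℝ) (φ : B → ℝ) (hφ0 : ∀ f, 0 ≤ φ f)
    (hDcont : ∀ f, Continuous fun x => D x f)
    (hDnn : ∀ x ∈ Simp ι, ∀ f, 0 ≤ D x f)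
    (hDsum : ∀ x, ∑ f, D x f = 1)
    (hDint : ∀ f, ∫ x in Simp ι, D x f = ∫ x in Simp ι, (1 - ∑ j, x j))
    (qmin p : ℝ) (hq : 0 < qmin) (hp0 : 0 ≤ p) :
    volume {x | x ∈ Simp ι ∧ qmin ≤ ∑ f, D x f * φ f - p} / volume (Simp ι)
      ≤ ENNReal.ofReal ((1 / (Fintype.card B : ℝ)) * (∑ f, φ f) / qmin) := by
  classical
  set S : Set (ι → ℝ) := Simp ι with hS
  set h : (ι → ℝ) → ℝ := fun x => ∑ f, D x f * φ f with hh
  set A : Set (ι → ℝ) := {x | x ∈ S ∧ qmin ≤ h x - p} with hA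
  set n : ℝ := (Fintype.card B : ℝ) with hn
  have hn0 : 0 < n := by
    have : 0 < Fintype.card B := Fintype.card_pos
    rw [hn]; exact_mod_cast this
  have hhcont : Continuous h := by
    rw [hh]
    exact continuous_finset_sum _ fun f _ => (hDcont f).mul continuous_const
  have hhnn : ∀ x ∈ S, 0 ≤ h x :=
    fun x hx => Finset.sum_nonneg fun f _ => mul_nonneg (hDnn x hx f) (hφ0 f)
  set J : ℝ := ∫ x in S, (1 - ∑ j, x j) with hJ
  have hSfin : volume S ≠ ⊤ := isCompact_simp.measure_lt_top.ne
  have hDintg : ∀ f : B, IntegrableOn (fun x => D x f) S volume :=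
    fun f => (hDcont f).continuousOn.integrableOn_compact isCompact_simp
  have hhintg : IntegrableOn h S volume :=
    hhcont.continuousOn.integrableOn_compact isCompact_simp
  -- n * J = volume S
  have hnJ : n * J = (volume S).toReal := by
    have h1 : ∑ f : B, ∫ x in S, D x f = ∫ x in S, ∑ f, D x f :=
      (integral_finset_sum _ fun f _ => hDintg f).symm
    have h2 : ∫ x in S, ∑ f, D x f = (volume S).toReal := by
      rw [setIntegral_congr_fun measurableSet_simp
        (g := fun _ => (1:ℝ)) (fun x _ => hDsum x)]
      simp [setIntegral_const]; rfl
    have h3 : ∑ f : B, ∫ x in S, D x f = n * J := by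
      rw [Finset.sum_congr rfl fun f _ => hDint f]
      simp [hn, mul_comm]
    linarith [h1, h2, h3]
  -- the integral of h over S
  have hint_h : ∫ x in S, h x = (∑ f, φ f) * J := by
    rw [hh]
    rw [integral_finset_sum _ fun f _ => (hDintg f).mul_const (φ f)]
    rw [Finset.sum_congr rfl fun f _ => by rw [integral_mul_const, hDint f]]
    rw [← Finset.mul_sum, mul_comm]
  -- A is a measurable subset of S
  have hAS : A ⊆ S := fun x hx => hx.1
  have hAmeas : MeasurableSet A := by
    have : A = S ∩ (fun x => h x - p) ⁻¹' Set.Ici qmin := by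
      ext x
      simp only [hA, Set.mem_setOf_eq, Set.mem_inter_iff, Set.mem_preimage, Set.mem_Ici]
    rw [this]
    exact measurableSet_simp.inter
      (((hhcont.sub continuous_const).measurable) measurableSet_Ici)
  have hAfin : volume A ≠ ⊤ :=
    (lt_of_le_of_lt (measure_mono hAS) isCompact_simp.measure_lt_top).ne
  -- Markov's inequality
  have hmarkov : qmin * (volume A).toReal ≤ ∫ x in S, h x := by
    have h1 : ∫ (_ : ι → ℝ) in A, qmin ∂volume = (volume A).toReal * qmin := by
      rw [setIntegral_const]; simp [smul_eq_mul]; exact Or.inl rfl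
    have h2 : ∫ (_ : ι → ℝ) in A, qmin ∂volume ≤ ∫ x in A, h x := by
      apply setIntegral_mono_on
        (integrableOn_const (lt_of_le_of_lt (measure_mono hAS)
          isCompact_simp.measure_lt_top).ne)
        (hhintg.mono_set hAS) hAmeas
      intro x hx
      have : qmin ≤ h x - p := hx.2
      linarith
    have h3 : ∫ x in A, h x ≤ ∫ x in S, h x := by
      apply setIntegral_mono_set hhintg
      · exact (ae_restrict_iff' measurableSet_simp).2
          (Filter.Eventually.of_forall fun x hx => hhnn x hx)
      · exact Filter.Eventually.of_forall fun x hx => hAS hx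
    calc qmin * (volume A).toReal = ∫ (_ : ι → ℝ) in A, qmin ∂volume := by
          rw [h1]; ring
      _ ≤ ∫ x in A, h x := h2
      _ ≤ ∫ x in S, h x := h3
  -- put it together
  set c : ℝ := (1 / n) * ∑ f, φ f with hc
  have hc0 : 0 ≤ c := mul_nonneg (by positivity)
    (Finset.sum_nonneg fun f _ => hφ0 f)
  have hkey : qmin * (volume A).toReal ≤ c * (volume S).toReal := by
    calc qmin * (volume A).toReal ≤ ∫ x in S, h x := hmarkov
      _ = (∑ f, φ f) * J := hint_h
      _ = c * (n * J) := by rw [hc]; field_simp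
      _ = c * (volume S).toReal := by rw [hnJ]
  have htoReal : (volume A).toReal ≤ (c / qmin) * (volume S).toReal := by
    rw [div_mul_eq_mul_div, le_div_iff₀ hq]
    nlinarith [hkey]
  have hfinal : volume A ≤ ENNReal.ofReal (c / qmin) * volume S := by
    calc volume A = ENNReal.ofReal (volume A).toReal := (ENNReal.ofReal_toReal hAfin).symm
      _ ≤ ENNReal.ofReal ((c / qmin) * (volume S).toReal) := ENNReal.ofReal_le_ofReal htoReal
      _ = ENNReal.ofReal (c / qmin) * ENNReal.ofReal (volume S).toReal :=
          ENNReal.ofReal_mul (div_nonneg hc0 hq.le)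
      _ = ENNReal.ofReal (c / qmin) * volume S := by rw [ENNReal.ofReal_toReal hSfin]
  show volume A / volume S ≤ ENNReal.ofReal (c / qmin)
  exact ENNReal.div_le_of_le_mul hfinal

end FamineAux

open MeasureTheory in
theorem famine_of_favorable_biasing_distributions {Ω B : Type*}
    [Fintype Ω] [DecidableEq Ω] [Fintype B] [DecidableEq B]
    (b₀ : B) (k : ℕ) (t : Finset Ω) (ht : t.card = k)
    (P : B → Ω → ℝ) (hP : ∀ f ω, 0 ≤ P f ω) (hsum : ∀ f, ∑ ω, P f ω = 1)
    (qmin : ℝ) (hq : 0 < qmin) (hq1 : qmin ≤ 1)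
    -- φ f is the success probability of information resource f on target t
    (φ : B → ℝ) (hφ : ∀ f, φ f = ∑ ω ∈ t, P f ω)
    -- parametrization of distributions D on B by their coordinates away from b₀
    (Dof : ({f : B // f ≠ b₀} → ℝ) → B → ℝ)
    (hDof : ∀ x f, Dof x f = if h : f = b₀ then 1 - ∑ i, x i else x ⟨f, h⟩) :
    volume {x : {f : B // f ≠ b₀} → ℝ |
        (∀ i, 0 ≤ x i) ∧ (∑ i, x i ≤ 1) ∧
          qmin ≤ ∑ f, Dof x f * φ f - (k : ℝ) / Fintype.card Ω} /
      volume {x : {f : B // f ≠ b₀} → ℝ | (∀ i, 0 ≤ x i) ∧ (∑ i, x i ≤ 1)}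
      ≤ ENNReal.ofReal
          (((k : ℝ) / Fintype.card Ω +
              ((1 / (Fintype.card B : ℝ)) * ∑ f, φ f - (k : ℝ) / Fintype.card Ω))
            / qmin) := by
  classical
  have : Nonempty B := ⟨b₀⟩
  have hp0 : (0:ℝ) ≤ (k : ℝ) / Fintype.card Ω :=
    div_nonneg (Nat.cast_nonneg _) (Nat.cast_nonneg _)
  have hφ0 : ∀ f, 0 ≤ φ f := fun f => by
    rw [hφ]; exact Finset.sum_nonneg fun ω _ => hP f ω
  have hDcont : ∀ f : B, Continuous (fun x : {f : B // f ≠ b₀} → ℝ => Dof x f) := by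
    intro f
    have heq : (fun x : {f : B // f ≠ b₀} → ℝ => Dof x f)
        = fun x => if hf : f = b₀ then 1 - ∑ i, x i else x ⟨f, hf⟩ := by
      funext x; exact hDof x f
    rw [heq]
    by_cases hf : f = b₀
    · simp only [dif_pos hf]
      exact continuous_const.sub (continuous_finset_sum _ fun k _ => continuous_apply k)
    · simp only [dif_neg hf]
      exact continuous_apply _
  have hDnn : ∀ x ∈ FamineAux.Simp {f : B // f ≠ b₀}, ∀ f, 0 ≤ Dof x f := by
    intro x hx f
    by_cases hf : f = b₀
    · rw [hDof, dif_pos hf]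
      have hle : ∑ i, x i ≤ 1 := hx.2
      linarith
    · rw [hDof, dif_neg hf]; exact hx.1 _
  have hsplit : ∀ g : B → ℝ, ∑ f, g f = g b₀ + ∑ i : {f : B // f ≠ b₀}, g i := by
    intro g
    rw [← Finset.add_sum_erase Finset.univ g (Finset.mem_univ b₀)]
    congr 1
    exact Finset.sum_subtype _ (fun x => by simp) g
  have hDsum : ∀ x : {f : B // f ≠ b₀} → ℝ, ∑ f, Dof x f = 1 := by
    intro x
    rw [hsplit]
    have h1 : Dof x b₀ = 1 - ∑ i, x i := by rw [hDof, dif_pos rfl]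
    have h2 : ∀ i : {f : B // f ≠ b₀}, Dof x i = x i := by
      intro i; rw [hDof, dif_neg i.2]
    rw [h1, Finset.sum_congr rfl fun i _ => h2 i]
    ring
  have hDint : ∀ f : B, ∫ x in FamineAux.Simp {f : B // f ≠ b₀}, Dof x f
      = ∫ x in FamineAux.Simp {f : B // f ≠ b₀}, (1 - ∑ j, x j) := by
    intro f
    by_cases hf : f = b₀
    · apply setIntegral_congr_fun FamineAux.measurableSet_simp
      intro x _
      show Dof x f = 1 - ∑ j, x j
      rw [hDof, dif_pos hf]
    · rw [FamineAux.integral_one_sub_sum (⟨f, hf⟩ : {f : B // f ≠ b₀})]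
      apply setIntegral_congr_fun FamineAux.measurableSet_simp
      intro x _
      show Dof x f = x ⟨f, hf⟩
      rw [hDof, dif_neg hf]
  have H := FamineAux.main Dof φ hφ0 hDcont hDnn hDsum hDint qmin
    ((k : ℝ) / Fintype.card Ω) hq hp0
  have hset : {x : {f : B // f ≠ b₀} → ℝ |
        (∀ i, 0 ≤ x i) ∧ (∑ i, x i ≤ 1) ∧
          qmin ≤ ∑ f, Dof x f * φ f - (k : ℝ) / Fintype.card Ω}
      = {x | x ∈ FamineAux.Simp {f : B // f ≠ b₀} ∧
          qmin ≤ ∑ f, Dof x f * φ f - (k : ℝ) / Fintype.card Ω} := by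
    ext x
    simp [FamineAux.Simp, and_assoc]
  have hset2 : {x : {f : B // f ≠ b₀} → ℝ | (∀ i, 0 ≤ x i) ∧ (∑ i, x i ≤ 1)}
      = FamineAux.Simp {f : B // f ≠ b₀} := rfl
  rw [hset, hset2]
  have harg : ((k : ℝ) / Fintype.card Ω +
      ((1 / (Fintype.card B : ℝ)) * ∑ f, φ f - (k : ℝ) / Fintype.card Ω)) / qmin
      = (1 / (Fintype.card B : ℝ)) * (∑ f, φ f) / qmin := by ring
  rw [harg]
  exact H
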